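/- If there exists a doubly even self-dual binary code of length n, then n is divisible by 8. -/

import Mathlib

/-- The dual code of a binary linear code. -/
def dualCode {ι : Type*} [Fintype ι] (C : Submodule (ZMod 2) (ι → ZMod 2)) :
    Submodule (ZMod 2) (ι → ZMod 2) where
  carrier := {x | ∀ y ∈ C, ∑ i, x i * y i = 0}
  add_mem' := fun ha hb y hy => by
    simp only [Set.mem_setOf_eq] at *
    simp only [Pi.add_apply, add_mul, Finset.sum_add_distrib, ha y hy, hb y hy, add_zero]
  zero_mem' := fun y hy => by simp
  smul_mem' := fun c x hx y hy => by
    simp only [Set.mem_setOf_eq] at *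
    simp only [Pi.smul_apply, smul_eq_mul, mul_assoc, ← Finset.mul_sum, hx y hy, mul_zero]

/-- The support of a binary vector. -/
def supp {ι : Type*} [Fintype ι] (x : ι → ZMod 2) : Finset ι :=
  Finset.univ.filter fun i => x i ≠ 0

/-- The (Hamming) weight of a binary vector. -/
def wt {ι : Type*} [Fintype ι] (x : ι → ZMod 2) : ℕ := (supp x).card

open Complex Finset


/-- Sign character of `ZMod 2` with values in `ℂ`. -/
noncomputable def eps (a : ZMod 2) : ℂ := if a = 0 then 1 else -1

lemma eps_zero : eps 0 = 1 := by simp [eps]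

lemma eps_add (a b : ZMod 2) : eps (a + b) = eps a * eps b := by
  unfold eps
  by_cases ha : a = 0
  · simp [ha]
  · by_cases hb : b = 0
    · simp [hb]
    · have hab : a + b = 0 := by
        have ha1 : a = 1 := by revert ha; revert a; decide
        have hb1 : b = 1 := by revert hb; revert b; decide
        rw [ha1, hb1]; decide
      simp [hab, ha, hb]

lemma eps_sum {ι : Type*} (s : Finset ι) (f : ι → ZMod 2) :
    eps (∑ i ∈ s, f i) = ∏ i ∈ s, eps (f i) := by
  classical
  induction s using Finset.cons_induction with
  | empty => simp [eps]
  | cons i s hi ih => rw [Finset.sum_cons, Finset.prod_cons, eps_add, ih]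

lemma val01 : ∀ a : ZMod 2, a.val = if a ≠ 0 then 1 else 0 := by decide

lemma zmod2_sum (f : ZMod 2 → ℂ) : ∑ a, f a = f 0 + f 1 :=
  Fin.sum_univ_two f



lemma wt_eq {n : ℕ} (x : Fin n → ZMod 2) : wt x = ∑ i, (x i).val := by
  classical
  rw [wt, supp, Finset.card_filter]
  exact Finset.sum_congr rfl fun i _ => by rw [val01 (x i)]

lemma neg_I_pow_of_four_dvd {k : ℕ} (hk : 4 ∣ k) : (-I) ^ k = 1 := by
  obtain ⟨m, rfl⟩ := hk
  rw [pow_mul]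
  norm_num [show ((-I) ^ 4 : ℂ) = 1 by rw [neg_pow]; norm_num [I_pow_four]]

lemma I_pow_of_four_dvd {k : ℕ} (hk : 4 ∣ k) : (I : ℂ) ^ k = 1 := by
  obtain ⟨m, rfl⟩ := hk
  rw [pow_mul, I_pow_four, one_pow]

/-- Gauss sum over all binary vectors. -/
lemma gauss_inner_sum {n : ℕ} (y : Fin n → ZMod 2) :
    ∑ x : Fin n → ZMod 2, I ^ wt x * eps (∑ i, x i * y i)
      = (1 + I) ^ n * (-I) ^ wt y := by
  classical
  have step1 : ∀ x : Fin n → ZMod 2,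
      I ^ wt x * eps (∑ i, x i * y i) = ∏ i, (I ^ (x i).val * eps (x i * y i)) := by
    intro x
    rw [wt_eq, eps_sum, ← Finset.prod_pow_eq_pow_sum, ← Finset.prod_mul_distrib]
  rw [Finset.sum_congr rfl fun x _ => step1 x]
  have step2 : ∑ x : Fin n → ZMod 2, ∏ i, (I ^ (x i).val * eps (x i * y i))
      = ∏ i, ∑ a : ZMod 2, I ^ a.val * eps (a * y i) := by
    rw [Finset.prod_univ_sum]
    rw [Fintype.piFinset_univ]
  rw [step2]
  have step3 : ∀ i, ∑ a : ZMod 2, I ^ a.val * eps (a * y i)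
      = (1 + I) * (if y i = 0 then 1 else -I) := by
    intro i
    rw [zmod2_sum]
    have h0 : ((0 : ZMod 2)).val = 0 := rfl
    have h1 : ((1 : ZMod 2)).val = 1 := rfl
    rw [h0, h1, pow_zero, pow_one, zero_mul, one_mul, eps_zero, one_mul]
    by_cases hy : y i = 0
    · simp [hy, eps]
    · simp only [hy, if_false, eps, if_neg hy]
      linear_combination I_mul_I
  rw [Finset.prod_congr rfl fun i _ => step3 i, Finset.prod_mul_distrib,
    Finset.prod_const, Finset.card_univ, Fintype.card_fin]
  congr 1
  rw [← Finset.prod_filter_mul_prod_filter_not Finset.univ (fun i => y i = 0)]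
  rw [Finset.prod_congr rfl (fun i hi => if_pos (Finset.mem_filter.mp hi).2),
    Finset.prod_congr rfl (fun i (hi : i ∈ Finset.univ.filter fun i => ¬ y i = 0) =>
      if_neg (Finset.mem_filter.mp hi).2),
    Finset.prod_const_one, one_mul, Finset.prod_const]
  rfl



lemma mem_dualCode {ι : Type*} [Fintype ι] (C : Submodule (ZMod 2) (ι → ZMod 2))
    (x : ι → ZMod 2) : x ∈ dualCode C ↔ ∀ y ∈ C, ∑ i, x i * y i = 0 := Iff.rfl

open scoped Classical in
/-- Character sum over a code. -/
lemma char_sum {n : ℕ} (C : Submodule (ZMod 2) (Fin n → ZMod 2)) [Fintype C]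
    (x : Fin n → ZMod 2) :
    ∑ y : C, eps (∑ i, x i * (y : Fin n → ZMod 2) i)
      = if x ∈ dualCode C then (Fintype.card C : ℂ) else 0 := by
  classical
  by_cases hx : x ∈ dualCode C
  · rw [if_pos hx]
    rw [Finset.sum_congr rfl fun y _ => by
      rw [(mem_dualCode C x).mp hx y y.2, eps_zero]]
    simp
  · rw [if_neg hx]
    rw [mem_dualCode] at hx
    push_neg at hx
    obtain ⟨y₀, hy₀C, hy₀⟩ := hx
    set y₀' : C := ⟨y₀, hy₀C⟩ with hy₀'
    set S := ∑ y : C, eps (∑ i, x i * (y : Fin n → ZMod 2) i) with hS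
    have key : S = -S := by
      calc S = ∑ y : C, eps (∑ i, x i * ((y + y₀' : C) : Fin n → ZMod 2) i) :=
            (Equiv.sum_comp (Equiv.addRight y₀')
              (fun y : C => eps (∑ i, x i * (y : Fin n → ZMod 2) i))).symm
        _ = ∑ y : C, eps (∑ i, x i * (y : Fin n → ZMod 2) i)
              * eps (∑ i, x i * y₀ i) := by
            refine Finset.sum_congr rfl fun y _ => ?_
            rw [← eps_add, ← Finset.sum_add_distrib]
            congr 1
            exact Finset.sum_congr rfl fun i _ => by
              simp [Pi.add_apply, mul_add, hy₀']
        _ = -S := by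
            have : eps (∑ i, x i * y₀ i) = -1 := if_neg hy₀
            rw [Finset.sum_congr rfl fun y _ => by rw [this]]
            simp [hS, Finset.sum_neg_distrib]
    have h2 : S + S = 0 := by linear_combination key
    exact add_self_eq_zero.mp h2

/-- If there exists a doubly even self-dual binary code of length `n`,
then `8 ∣ n`. -/
theorem stmt_2 {n : ℕ}
    (h : ∃ C : Submodule (ZMod 2) (Fin n → ZMod 2),
      C = dualCode C ∧ ∀ x ∈ C, 4 ∣ wt x) :
    8 ∣ n := by
  classical
  obtain ⟨C, hC, h4⟩ := h
  haveI : DecidablePred (· ∈ C) := Classical.decPred _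
  set M := Fintype.card C with hMdef
  have hM0 : 0 < M := Fintype.card_pos
  -- the double sum, computed two ways
  have h1 : ∑ y : C, ∑ x : Fin n → ZMod 2,
      I ^ wt x * eps (∑ i, x i * (y : Fin n → ZMod 2) i) = (M : ℂ) * (1 + I) ^ n := by
    rw [Finset.sum_congr rfl fun y _ => by
      rw [gauss_inner_sum, neg_I_pow_of_four_dvd (h4 y y.2), mul_one]]
    simp [mul_comm, hMdef]
  have h2 : ∑ y : C, ∑ x : Fin n → ZMod 2,
      I ^ wt x * eps (∑ i, x i * (y : Fin n → ZMod 2) i) = (M : ℂ) * (M : ℂ) := by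
    rw [Finset.sum_comm]
    have : ∀ x : Fin n → ZMod 2,
        ∑ y : C, I ^ wt x * eps (∑ i, x i * (y : Fin n → ZMod 2) i)
          = if x ∈ C then (M : ℂ) else 0 := by
      intro x
      rw [← Finset.mul_sum, char_sum, ← hC]
      by_cases hx : x ∈ C
      · rw [if_pos hx, if_pos hx, I_pow_of_four_dvd (h4 x hx), one_mul]
      · rw [if_neg hx, if_neg hx, mul_zero]
    rw [Finset.sum_congr rfl fun x _ => this x, Finset.sum_ite,
      Finset.sum_const_zero, add_zero, Finset.sum_const]
    have hcard : (Finset.univ.filter (fun x => x ∈ C)).card = M := by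
      rw [hMdef]
      exact (Fintype.card_subtype (fun x => x ∈ C)).symm
    rw [hcard, nsmul_eq_mul]
  have hMC : (M : ℂ) = (1 + I) ^ n := by
    have := h1.symm.trans h2
    exact mul_left_cancel₀ (by exact_mod_cast hM0.ne' : (M : ℂ) ≠ 0) this.symm
  -- take norms
  have hnormsq : ((M * M : ℕ) : ℝ) = ((2 ^ n : ℕ) : ℝ) := by
    have := congrArg Complex.normSq hMC
    rw [Complex.normSq_natCast, map_pow] at this
    have h2' : Complex.normSq (1 + I) = 2 := by
      simp [Complex.normSq_apply]
      norm_num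
    rw [h2'] at this
    push_cast
    exact_mod_cast this
  have hMM : M * M = 2 ^ n := Nat.cast_injective hnormsq
  have hdvd : M ∣ 2 ^ n := hMM ▸ dvd_mul_right M M
  obtain ⟨m, hmn, hm⟩ := (Nat.dvd_prime_pow Nat.prime_two).mp hdvd
  rw [hm] at hMM hMC
  have hn : n = 2 * m := by
    have : (2 : ℕ) ^ (2 * m) = 2 ^ n := by
      rw [two_mul, pow_add]; exact hMM
    exact (Nat.pow_right_injective (le_refl 2) this).symm
  -- deduce I ^ m = 1
  have hIm : (I : ℂ) ^ m = 1 := by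
    have hsq : ((1 + I) : ℂ) ^ 2 = 2 * I := by
      linear_combination I_mul_I
    have : ((2 : ℂ) ^ m) = 2 ^ m * I ^ m := by
      calc ((2 : ℂ) ^ m) = ((2 ^ m : ℕ) : ℂ) := by push_cast; ring
        _ = (1 + I) ^ n := hMC
        _ = ((1 + I) ^ 2) ^ m := by rw [hn, pow_mul]
        _ = 2 ^ m * I ^ m := by rw [hsq, mul_pow]
    have h2m : ((2 : ℂ) ^ m) ≠ 0 := pow_ne_zero _ two_ne_zero
    exact (mul_left_cancel₀ h2m (by rw [mul_one]; exact this)).symm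
  -- deduce 4 ∣ m
  have h4m : 4 ∣ m := by
    have hmod : (I : ℂ) ^ (m % 4) = 1 := by
      rw [← Nat.div_add_mod m 4, pow_add, pow_mul, I_pow_four, one_pow, one_mul] at hIm
      exact hIm
    have hcases : m % 4 = 0 ∨ m % 4 = 1 ∨ m % 4 = 2 ∨ m % 4 = 3 := by omega
    rcases hcases with h | h | h | h
    · omega
    · rw [h, pow_one] at hmod
      have := congrArg Complex.im hmod
      simp at this
    · rw [h, I_sq] at hmod; norm_num at hmod
    · rw [h] at hmod
      have h3 : (I : ℂ) ^ 3 = -I := by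
        rw [pow_succ, I_sq]; ring
      rw [h3] at hmod
      have hI1 : (I : ℂ) = -1 := by linear_combination -hmod
      have him := congrArg Complex.im hI1
      simp at him
  omega
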